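/- arXiv:1511.05623 — 4 statements merged into one kernel-verified Lean document; each statement's English description precedes it below -/
import Mathlib

section
/- Let (V, E, s, t) be a finite connected directed multigraph and let B ⊆ V be a nonempty set of boundary vertices. Then for every function ρ : E → ℝ there exists a discrete antiderivative of ρ rel B, i.e. a function λ : E → ℝ such that for every vertex v ∉ B one has Σ_{e : t(e) = v} λ(e) = Σ_{e : s(e) = v} (λ(e) − ρ(e)). -/
open Finset

/-- On a finite connected directed multigraph `(V, E, s, t)` with a
nonempty set `B` of boundary vertices, every density `ρ : E → ℝ` admits a discrete
antiderivative rel `B`: a function `l : E → ℝ` such that for every vertex `v ∉ B`,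
the Kirchhoff rule `∑_{e : t(e) = v} l(e) = ∑_{e : s(e) = v} (l(e) − ρ(e))` holds. -/
theorem stmt_0 {V E : Type*} [Fintype V] [Fintype E] [DecidableEq V]
    (s t : E → V)
    (hconn : ∀ v w : V, Relation.ReflTransGen
      (fun a b => ∃ e, (s e = a ∧ t e = b) ∨ (s e = b ∧ t e = a)) v w)
    (B : Set V) (hB : B.Nonempty) (ρ : E → ℝ) :
    ∃ l : E → ℝ, ∀ v ∉ B,
      ∑ e ∈ Finset.univ.filter (fun e => t e = v), l e =
      ∑ e ∈ Finset.univ.filter (fun e => s e = v), (l e - ρ e) := by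
  classical
  obtain ⟨b, hb⟩ := hB
  have indsum : ∀ (e : E) (P : E → Prop) [DecidablePred P] (ε : ℝ),
      ∑ e' ∈ Finset.univ.filter P, (if e' = e then ε else 0)
        = if P e then ε else 0 := by
    intro e P _ ε
    rw [Finset.sum_ite_eq' (Finset.univ.filter P) e (fun _ => ε)]
    simp
  have flip : ∀ (a c : V) (x : ℝ),
      (if a = c then x else 0) = x * (if c = a then 1 else 0) := by
    intro a c x
    rcases eq_or_ne a c with h | h
    · subst h; simp
    · rw [if_neg h, if_neg (Ne.symm h), mul_zero]
  have key : ∀ v : V, ∃ f : E → ℝ, ∀ w ∉ B,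
      (∑ e ∈ Finset.univ.filter (fun e => t e = w), f e) -
      (∑ e ∈ Finset.univ.filter (fun e => s e = w), f e)
        = if w = v then 1 else 0 := by
    intro v
    induction hconn b v with
    | refl =>
      refine ⟨0, fun w hw => ?_⟩
      have hwb : w ≠ b := fun h => hw (h ▸ hb)
      simp [hwb]
    | @tail u v' hbu hstep ih =>
      obtain ⟨f, hf⟩ := ih
      obtain ⟨e, he⟩ := hstep
      rcases he with ⟨hs, ht⟩ | ⟨hs, ht⟩
      · refine ⟨fun e' => f e' + (if e' = e then 1 else 0), fun w hw => ?_⟩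
        rw [Finset.sum_add_distrib, Finset.sum_add_distrib,
          indsum e (fun e' => t e' = w) 1, indsum e (fun e' => s e' = w) 1]
        have hfw := hf w hw
        rw [hs, ht, flip v' w 1, flip u w 1, one_mul, one_mul]
        linarith
      · refine ⟨fun e' => f e' + (if e' = e then (-1 : ℝ) else 0), fun w hw => ?_⟩
        rw [Finset.sum_add_distrib, Finset.sum_add_distrib,
          indsum e (fun e' => t e' = w) (-1), indsum e (fun e' => s e' = w) (-1)]
        have hfw := hf w hw
        rw [hs, ht, flip u w (-1), flip v' w (-1)]
        linarith
  choose F hF using key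
  set c : V → ℝ := fun v => -∑ e ∈ Finset.univ.filter (fun e => s e = v), ρ e with hc
  refine ⟨fun e => ∑ v, c v * F v e, fun w hw => ?_⟩
  have hdiv : (∑ e ∈ Finset.univ.filter (fun e => t e = w), ∑ v, c v * F v e) -
      (∑ e ∈ Finset.univ.filter (fun e => s e = w), ∑ v, c v * F v e) = c w := by
    rw [Finset.sum_comm, Finset.sum_comm (s := Finset.univ.filter (fun e => s e = w)),
      ← Finset.sum_sub_distrib]
    have : ∀ v : V,
        (∑ e ∈ Finset.univ.filter (fun e => t e = w), c v * F v e) -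
        (∑ e ∈ Finset.univ.filter (fun e => s e = w), c v * F v e)
          = if w = v then c v else 0 := by
      intro v
      rw [← Finset.mul_sum, ← Finset.mul_sum, ← mul_sub, hF v w hw]
      by_cases h : w = v <;> simp [h]
    rw [Finset.sum_congr rfl (fun v _ => this v), Finset.sum_ite_eq _ w c]
    simp
  rw [Finset.sum_sub_distrib]
  have : c w = -∑ e ∈ Finset.univ.filter (fun e => s e = w), ρ e := rfl
  linarith
end

section
/- Let (V, E, s, t) be a finite directed multigraph and let ε : E → ℝ take values in {−1, 1}. Assume that for every nonempty subset E' ⊆ E there exists a vertex v with Σ_{e ∈ E', t(e) = v} ε(e) ≠ Σ_{e ∈ E', s(e) = v} ε(e) (i.e. the ε-weighted boundary of the 1-chain Σ_{e ∈ E'} ε(e)·e is nonzero). Then there exists a function η : V → ℝ such that ε(e)·(η(t(e)) − η(s(e))) > 0 for every edge e; in particular, the 1-coboundary ξ(e) := η(t(e)) − η(s(e)) satisfies sign ξ = ε. -/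
open Finset

namespace Stmt5Aux

variable {V E : Type*}

/-- Walk predicate: `WalkFrom s' t' a b l` means the list of edges `l` forms a
directed walk from `a` to `b`. -/
def WalkFrom (s' t' : E → V) : V → V → List E → Prop
  | a, b, [] => a = b
  | a, b, e :: l => s' e = a ∧ WalkFrom s' t' (t' e) b l

lemma walkFrom_append {s' t' : E → V} {a b c : V} {l1 l2 : List E}
    (h1 : WalkFrom s' t' a b l1) (h2 : WalkFrom s' t' b c l2) :
    WalkFrom s' t' a c (l1 ++ l2) := by
  induction l1 generalizing a with
  | nil => cases h1; simpa using h2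
  | cons e l ih => exact ⟨h1.1, ih h1.2⟩

lemma walkFrom_append_iff {s' t' : E → V} {a c : V} {l1 l2 : List E} :
    WalkFrom s' t' a c (l1 ++ l2) ↔ ∃ b, WalkFrom s' t' a b l1 ∧ WalkFrom s' t' b c l2 := by
  constructor
  · intro hw
    induction l1 generalizing a with
    | nil => exact ⟨a, rfl, hw⟩
    | cons e l ih =>
      obtain ⟨b, hb1, hb2⟩ := ih hw.2
      exact ⟨b, ⟨hw.1, hb1⟩, hb2⟩
  · rintro ⟨b, h1, h2⟩; exact walkFrom_append h1 h2

lemma exists_walk {s' t' : E → V} {a b : V}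
    (h : Relation.TransGen (fun x y => ∃ e, s' e = x ∧ t' e = y) a b) :
    ∃ l : List E, l ≠ [] ∧ WalkFrom s' t' a b l := by
  induction h with
  | single hr =>
    obtain ⟨e, he1, he2⟩ := hr
    exact ⟨[e], by simp, he1, he2⟩
  | tail hab hbc ih =>
    obtain ⟨l, hl, hw⟩ := ih
    obtain ⟨e, he1, he2⟩ := hbc
    exact ⟨l ++ [e], by simp, he2 ▸ walkFrom_append hw ⟨he1, rfl⟩⟩

lemma walkFrom_maps {s' t' : E → V} {a b : V} {l : List E}
    (h : WalkFrom s' t' a b l) : l.map s' ++ [b] = a :: l.map t' := by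
  induction l generalizing a with
  | nil => cases h; simp
  | cons e l ih =>
    obtain ⟨h1, h2⟩ := h
    simpa [h1] using ih h2

/-- decomposition of a cons-sublist -/
lemma sub_cons {α : Type*} {a : α} {l₁ l₂ : List α} (h : List.Sublist (a :: l₁) l₂) :
    ∃ p q, l₂ = p ++ a :: q ∧ List.Sublist l₁ q := by
  induction l₂ with
  | nil => simp at h
  | cons x l ih =>
    cases h with
    | cons _ h =>
      obtain ⟨p, q, rfl, hq⟩ := ih h
      exact ⟨x :: p, q, rfl, hq⟩
    | cons_cons _ h => exact ⟨[], l, rfl, h⟩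

lemma dup_decomp {α : Type*} {l : List α} (h : ¬ l.Nodup) :
    ∃ (x : α) (l1 l2 l3 : List α), l = l1 ++ x :: l2 ++ x :: l3 := by
  obtain ⟨x, hx⟩ := List.exists_duplicate_iff_not_nodup.2 h
  have hsub := List.duplicate_iff_sublist.1 hx
  obtain ⟨p, q, rfl, hq⟩ := sub_cons hsub
  obtain ⟨p', q', rfl, -⟩ := sub_cons hq
  exact ⟨x, p, p', q', by simp⟩

end Stmt5Aux

open Stmt5Aux

/-- Lemma 4.31 of the paper. Let `(V, E, s, t)` be a finite directed
multigraph and `ε : E → ℝ` take values in `{−1, 1}`.  If for every nonempty subset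
`E' ⊆ E` the `ε`-weighted boundary of the 1-chain `∑_{e ∈ E'} ε(e)·e` is nonzero
(i.e. there is a vertex `v` where the incoming and outgoing `ε`-sums over `E'` differ),
then there is a potential `η : V → ℝ` with `ε(e)·(η(t(e)) − η(s(e))) > 0` for every
edge `e`; in particular the coboundary `ξ(e) = η(t(e)) − η(s(e))` has sign pattern `ε`. -/
theorem stmt_5 {V E : Type*} [Fintype V] [Fintype E] [DecidableEq V]
    (s t : E → V) (ε : E → ℝ) (hε : ∀ e, ε e = 1 ∨ ε e = -1)
    (h : ∀ E' : Finset E, E'.Nonempty → ∃ v : V,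
      ∑ e ∈ E'.filter (fun e => t e = v), ε e ≠
      ∑ e ∈ E'.filter (fun e => s e = v), ε e) :
    ∃ η : V → ℝ, ∀ e, ε e * (η (t e) - η (s e)) > 0 := by
  classical
  -- reoriented edge maps
  set s' : E → V := fun e => if ε e = 1 then s e else t e with hs'
  set t' : E → V := fun e => if ε e = 1 then t e else s e with ht'
  -- Step 1: no closed walk exists (from any nodup closed walk we contradict `h`)
  have nodup_case : ∀ (v : V) (l : List E), l ≠ [] → l.Nodup →
      WalkFrom s' t' v v l → False := by
    intro v l hne hnd hw
    set E' : Finset E := ⟨(l : Multiset E), by exact_mod_cast hnd⟩ with hE'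
    have hE'ne : E'.Nonempty := by
      obtain ⟨e, l', rfl⟩ := List.exists_cons_of_ne_nil hne
      exact ⟨e, by simp [hE']⟩
    obtain ⟨u, hu⟩ := h E' hE'ne
    apply hu
    -- multiset equality of sources and targets
    have hmaps := walkFrom_maps hw
    have hms : ((l.map s' : List V) : Multiset V) = ((l.map t' : List V) : Multiset V) := by
      have h2 : ((l.map s' : List V) : Multiset V) + (([v] : List V) : Multiset V)
          = v ::ₘ ((l.map t' : List V) : Multiset V) := by
        rw [Multiset.coe_add, Multiset.cons_coe, hmaps]
      rw [Multiset.coe_singleton, add_comm, Multiset.singleton_add] at h2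
      exact (Multiset.cons_inj_right v).1 h2
    -- turn Finset sums into multiset sums over l
    have key : ∑ e ∈ E', ((if t e = u then ε e else 0) - (if s e = u then ε e else 0)) = 0 := by
      have hfun : ∀ e, ((if t e = u then ε e else 0) - (if s e = u then ε e else 0))
          = (if t' e = u then (1:ℝ) else 0) - (if s' e = u then (1:ℝ) else 0) := by
        intro e
        rcases hε e with h1 | h1
        · simp [hs', ht', h1]
        · have hne1 : ε e ≠ 1 := by rw [h1]; norm_num
          simp only [hs', ht', h1, if_neg hne1]
          by_cases hte : t e = u <;> by_cases hse : s e = u <;> simp [hte, hse]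
      rw [Finset.sum_congr rfl (fun e _ => hfun e), Finset.sum_sub_distrib]
      have hsum : ∀ (f : E → V),
          (∑ e ∈ E', (if f e = u then (1:ℝ) else 0))
            = (((l.map f : List V) : Multiset V).map (fun w => if w = u then (1:ℝ) else 0)).sum := by
        intro f
        rw [Finset.sum]
        simp [hE', Multiset.map_map, Function.comp_def]
      rw [hsum t', hsum s', hms]
      ring
    rw [Finset.sum_sub_distrib] at key
    rw [Finset.sum_filter, Finset.sum_filter]
    linarith [key]
  have no_walk : ∀ (n : ℕ) (v : V) (l : List E), l.length = n → l ≠ [] →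
      WalkFrom s' t' v v l → False := by
    intro n
    induction n using Nat.strong_induction_on with
    | _ n ih =>
      intro v l hlen hne hw
      by_cases hnd : l.Nodup
      · exact nodup_case v l hne hnd hw
      · obtain ⟨x, l1, l2, l3, rfl⟩ := dup_decomp hnd
        rw [show l1 ++ x :: l2 ++ x :: l3 = l1 ++ ((x :: l2) ++ (x :: l3)) by simp] at hw
        obtain ⟨b, hb1, hb2⟩ := walkFrom_append_iff.1 hw
        obtain ⟨c, hc1, hc2⟩ := walkFrom_append_iff.1 hb2
        -- hc1 : WalkFrom b c (x :: l2), hc2 : WalkFrom c v (x :: l3)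
        have hxb : s' x = b := hc1.1
        have hxc : s' x = c := hc2.1
        have hbc : b = c := hxb.symm.trans hxc
        have hclosed : WalkFrom s' t' b b (x :: l2) := by
          rw [← hbc] at hc1
          exact hc1
        refine ih (x :: l2).length ?_ b (x :: l2) rfl (by simp) hclosed
        subst hlen
        simp
        omega
  have key : ∀ v : V, ¬ Relation.TransGen (fun x y => ∃ e, s' e = x ∧ t' e = y) v v := by
    intro v hv
    obtain ⟨l, hne, hw⟩ := exists_walk hv
    exact no_walk l.length v l rfl hne hw
  -- Step 2: build the potential from the acyclic relation
  set r : V → V → Prop := fun x y => ∃ e, s' e = x ∧ t' e = y with hr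
  set η : V → ℝ := fun v =>
    ((univ.filter fun u => Relation.TransGen r u v ∨ u = v).card : ℝ) with hη
  have hmono : ∀ e : E, η (s' e) < η (t' e) := by
    intro e
    have hre : r (s' e) (t' e) := ⟨e, rfl, rfl⟩
    have hsubset : (univ.filter fun u => Relation.TransGen r u (s' e) ∨ u = s' e)
        ⊂ (univ.filter fun u => Relation.TransGen r u (t' e) ∨ u = t' e) := by
      constructor
      · intro u hu
        simp only [mem_filter, mem_univ, true_and] at hu ⊢
        rcases hu with h1 | rfl
        · exact Or.inl (h1.tail hre)
        · exact Or.inl (Relation.TransGen.single hre)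
      · intro hcon
        have : t' e ∈ (univ.filter fun u => Relation.TransGen r u (t' e) ∨ u = t' e) := by
          simp
        have h2 := hcon this
        simp only [mem_filter, mem_univ, true_and] at h2
        rcases h2 with h2 | h2
        · exact key (t' e) (h2.tail hre)
        · exact key (t' e) (Relation.TransGen.single (h2 ▸ hre))
    have hlt := Finset.card_lt_card hsubset
    simpa [hη] using (Nat.cast_lt (α := ℝ)).2 hlt
  refine ⟨η, fun e => ?_⟩
  rcases hε e with h1 | h1
  · have := hmono e
    simp only [hs', ht', h1, if_pos rfl] at this
    rw [h1]
    simpa using sub_pos.2 this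
  · have := hmono e
    have hne1 : ε e ≠ 1 := by rw [h1]; norm_num
    simp only [hs', ht', if_neg hne1] at this
    rw [h1]
    nlinarith
end

section
/- Let (V, E, s, t) be a finite directed multigraph, let f : V → ℝ satisfy f(s(e)) < f(t(e)) for every edge e, and let ε : E → ℝ take values in {−1, 1} and satisfy ε(e₁) = ε(e₂) whenever t(e₁) = t(e₂) (edges sharing a head have equal sign). Then for every nonempty subset E' ⊆ E there exists a vertex v with Σ_{e ∈ E', t(e) = v} ε(e) ≠ Σ_{e ∈ E', s(e) = v} ε(e); that is, the ε-weighted boundary of the 1-chain Σ_{e ∈ E'} ε(e)·e is nonzero. -/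
open Finset

/-- Let `(V, E, s, t)` be a finite directed multigraph, `f : V → ℝ`
strictly increase along every edge, and `ε : E → ℝ` take values in `{−1, 1}` with equal
values on edges sharing a head.  Then for every nonempty `E' ⊆ E` the `ε`-weighted
boundary of the 1-chain `∑_{e ∈ E'} ε(e)·e` is nonzero: some vertex `v` has different
incoming and outgoing `ε`-sums over `E'`. -/
theorem stmt_7 {V E : Type*} [Fintype V] [Fintype E] [DecidableEq V]
    (s t : E → V) (f : V → ℝ) (hf : ∀ e, f (s e) < f (t e))
    (ε : E → ℝ) (hε : ∀ e, ε e = 1 ∨ ε e = -1)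
    (hhead : ∀ e₁ e₂, t e₁ = t e₂ → ε e₁ = ε e₂) :
    ∀ E' : Finset E, E'.Nonempty → ∃ v : V,
      ∑ e ∈ E'.filter (fun e => t e = v), ε e ≠
      ∑ e ∈ E'.filter (fun e => s e = v), ε e := by
  intro E' hE'
  obtain ⟨v, hvmem, hvmax⟩ := (E'.image t).exists_max_image f (hE'.image t)
  obtain ⟨e₀, he₀E', he₀v⟩ := Finset.mem_image.mp hvmem
  refine ⟨v, ?_⟩
  have hout : E'.filter (fun e => s e = v) = ∅ := by
    refine Finset.filter_eq_empty_iff.mpr ?_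
    intro e heE' hse
    have h1 : f (t e) ≤ f v := hvmax _ (Finset.mem_image_of_mem t heE')
    have h2 : f (s e) < f (t e) := hf e
    rw [hse] at h2
    linarith
  rw [hout, Finset.sum_empty]
  have hconst : ∀ e ∈ E'.filter (fun e => t e = v), ε e = ε e₀ := by
    intro e he
    obtain ⟨_, hte⟩ := Finset.mem_filter.mp he
    exact hhead e e₀ (by rw [hte, he₀v])
  rw [Finset.sum_congr rfl hconst, Finset.sum_const, nsmul_eq_mul]
  have hcard : 0 < (E'.filter (fun e => t e = v)).card := by
    refine Finset.card_pos.mpr ⟨e₀, Finset.mem_filter.mpr ⟨he₀E', he₀v⟩⟩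
  have : ε e₀ ≠ 0 := by rcases hε e₀ with h | h <;> rw [h] <;> norm_num
  positivity
end

section
/- Let μ be a finite Borel measure on the interval [0,1] such that μ(J) > 0 for every nonempty open subinterval J of (0,1), let f : [0,1] → ℝ be strictly increasing, and let c₀ ≤ 0 be a real number. Define g(x) := c₀ + ∫_{[0,x]} f dμ. If g(1) ≤ 0, then g(x) < 0 for every x ∈ (0,1). -/
open MeasureTheory

/-- Remark 4.22. Let `μ` be a finite Borel measure on `[0,1]`
(supported there) giving positive mass to every nonempty open subinterval of `(0,1)`,
let `f` be strictly increasing on `[0,1]`, and let `c₀ ≤ 0`.  Define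
`g(x) = c₀ + ∫_{[0,x]} f dμ`.  If `g(1) ≤ 0`, then `g(x) < 0` for every `x ∈ (0,1)`. -/
theorem stmt_12 (μ : Measure ℝ) [IsFiniteMeasure μ]
    (hsupp : μ (Set.Icc (0 : ℝ) 1)ᶜ = 0)
    (hpos : ∀ x y : ℝ, 0 ≤ x → x < y → y ≤ 1 → 0 < μ (Set.Ioo x y))
    (f : ℝ → ℝ) (hf : StrictMonoOn f (Set.Icc (0 : ℝ) 1))
    (c₀ : ℝ) (hc₀ : c₀ ≤ 0)
    (g : ℝ → ℝ) (hg : ∀ x : ℝ, g x = c₀ + ∫ t in Set.Icc 0 x, f t ∂μ)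
    (h1 : g 1 ≤ 0) :
    ∀ x ∈ Set.Ioo (0 : ℝ) 1, g x < 0 := by
  rintro x ⟨hx0, hx1⟩
  by_contra hcon
  push_neg at hcon
  have hxmem : x ∈ Set.Icc (0 : ℝ) 1 := ⟨hx0.le, hx1.le⟩
  have hmono : MonotoneOn f (Set.Icc (0 : ℝ) 1) := hf.monotoneOn
  have hInt : ∀ a b : ℝ, 0 ≤ a → b ≤ 1 → IntegrableOn f (Set.Icc a b) μ := by
    intro a b ha hb
    exact ((hmono.mono (Set.Icc_subset_Icc ha hb)).integrableOn_isCompact isCompact_Icc)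
  rcases lt_or_ge (f x) 0 with hfx | hfx
  · -- f x < 0 : integral over [0,x] is strictly negative
    have hIc : IntegrableOn f (Set.Icc 0 x) μ := hInt 0 x le_rfl hx1.le
    have hconst : IntegrableOn (fun _ => f x) (Set.Icc 0 x) μ := integrableOn_const
      (measure_ne_top μ _)
    have hle : (∫ t in Set.Icc 0 x, f t ∂μ) ≤ ∫ _ in Set.Icc 0 x, f x ∂μ := by
      refine setIntegral_mono_on hIc hconst measurableSet_Icc ?_
      intro t ht
      exact hmono ⟨ht.1, ht.2.trans hx1.le⟩ hxmem ht.2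
    rw [setIntegral_const] at hle
    have hμ : 0 < (μ (Set.Icc 0 x)).toReal := by
      refine ENNReal.toReal_pos ?_ (measure_ne_top μ _)
      exact (lt_of_lt_of_le (hpos 0 x le_rfl hx0 hx1.le)
        (measure_mono Set.Ioo_subset_Icc_self)).ne'
    have : (∫ t in Set.Icc 0 x, f t ∂μ) < 0 :=
      lt_of_le_of_lt hle (by simpa [measureReal_def] using mul_neg_of_pos_of_neg hμ hfx)
    have := hg x
    linarith [hcon]
  · -- 0 ≤ f x : integral over (x,1] is strictly positive but equals g 1 - g x ≤ 0
    set m : ℝ := (x + 1) / 2 with hm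
    have hxm : x < m := by rw [hm]; linarith
    have hm1 : m < 1 := by rw [hm]; linarith
    have hmmem : m ∈ Set.Icc (0 : ℝ) 1 := ⟨by linarith, hm1.le⟩
    have hIc0x : IntegrableOn f (Set.Icc 0 x) μ := hInt 0 x le_rfl hx1.le
    have hIcx1 : IntegrableOn f (Set.Ioc x 1) μ :=
      (hInt x 1 hx0.le le_rfl).mono_set Set.Ioc_subset_Icc_self
    have hsplit : (∫ t in Set.Icc 0 1, f t ∂μ)
        = (∫ t in Set.Icc 0 x, f t ∂μ) + ∫ t in Set.Ioc x 1, f t ∂μ := by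
      rw [← setIntegral_union ?_ measurableSet_Ioc hIc0x hIcx1,
        Set.Icc_union_Ioc_eq_Icc hx0.le hx1.le]
      · exact Set.disjoint_left.2 fun t ht ht' => absurd ht.2 (not_le.2 ht'.1)
    have hB : (∫ t in Set.Ioc x 1, f t ∂μ) ≤ 0 := by
      have h1' := hg 1
      have hx' := hg x
      rw [hsplit] at h1'
      linarith
    -- now show the integral over (x,1] is positive
    have hsplit2 : (∫ t in Set.Ioc x 1, f t ∂μ)
        = (∫ t in Set.Ioc x m, f t ∂μ) + ∫ t in Set.Ioc m 1, f t ∂μ := by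
      rw [← setIntegral_union ?_ measurableSet_Ioc
        (hIcx1.mono_set (Set.Ioc_subset_Ioc le_rfl hm1.le))
        (hIcx1.mono_set (Set.Ioc_subset_Ioc hxm.le le_rfl)),
        Set.Ioc_union_Ioc_eq_Ioc hxm.le hm1.le]
      · exact Set.disjoint_left.2 fun t ht ht' => absurd ht.2 (not_le.2 ht'.1)
    have hA : 0 ≤ ∫ t in Set.Ioc x m, f t ∂μ := by
      refine setIntegral_nonneg measurableSet_Ioc fun t ht => ?_
      exact hfx.trans (hf hxmem ⟨(hx0.trans ht.1).le, ht.2.trans hm1.le⟩ ht.1).le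
    have hfm : 0 < f m := lt_of_le_of_lt hfx (hf hxmem hmmem hxm)
    have hμm : 0 < (μ (Set.Ioc m 1)).toReal := by
      refine ENNReal.toReal_pos ?_ (measure_ne_top μ _)
      exact (lt_of_lt_of_le (hpos m 1 hmmem.1 hm1 le_rfl)
        (measure_mono Set.Ioo_subset_Ioc_self)).ne'
    have hC : 0 < ∫ t in Set.Ioc m 1, f t ∂μ := by
      have hconst : IntegrableOn (fun _ => f m) (Set.Ioc m 1) μ := integrableOn_const
        (measure_ne_top μ _)
      have hle : (∫ _ in Set.Ioc m 1, f m ∂μ) ≤ ∫ t in Set.Ioc m 1, f t ∂μ := by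
        refine setIntegral_mono_on hconst
          ((hInt m 1 hmmem.1 le_rfl).mono_set Set.Ioc_subset_Icc_self)
          measurableSet_Ioc fun t ht => ?_
        exact hmono hmmem ⟨(hmmem.1.trans ht.1.le), ht.2⟩ ht.1.le
      rw [setIntegral_const] at hle
      exact lt_of_lt_of_le (by simpa [measureReal_def] using mul_pos hμm hfm) hle
    linarith
end
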